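/- Let A : Matrix (Fin n) (Fin n) ℝ. Define a sequence of simple graphs on Fin n by symbolic Gaussian elimination: G_0 := G(A), and for each k : Fin n (processed in increasing order), G_{k+1} has i adjacent to j iff G_k has i adjacent to j, or (i ≠ j and k < i and k < j and in G_k both i and j are adjacent to k). Then in the final graph G_n, vertices i and j are adjacent if and only if the fill relation F i j holds, i.e. i ≠ j and there exists a walk from i to j in G(A) all of whose interior vertices u satisfy u < i and u < j. -/

import Mathlib

/-- The undirected graph `G(A)` of a square real matrix `A`: `i` is adjacent to `j` iff
`i ≠ j` and (`A i j ≠ 0` or `A j i ≠ 0`). -/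
def graphOf {n : ℕ} (A : Matrix (Fin n) (Fin n) ℝ) : SimpleGraph (Fin n) where
  Adj i j := i ≠ j ∧ (A i j ≠ 0 ∨ A j i ≠ 0)
  symm := by
    constructor
    intro i j h
    exact ⟨h.1.symm, h.2.symm⟩
  loopless := by
    constructor
    intro i h
    exact h.1 rfl

/-- The fill relation of `A`: `fill A i j` iff `i ≠ j` and there is a walk from `i` to
`j` in `G(A)` all of whose interior vertices `u` satisfy `u < i` and `u < j`. -/
def fill {n : ℕ} (A : Matrix (Fin n) (Fin n) ℝ) (i j : Fin n) : Prop :=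
  i ≠ j ∧ ∃ w : (graphOf A).Walk i j, ∀ u ∈ w.support.tail.dropLast, u < i ∧ u < j

/-- One step of symbolic Gaussian elimination: eliminating vertex `k` makes `i` and `j`
adjacent iff they were already adjacent, or `i ≠ j`, both are larger than `k`, and both
were adjacent to `k`. -/
def elimStep {n : ℕ} (k : Fin n) (G : SimpleGraph (Fin n)) : SimpleGraph (Fin n) where
  Adj i j := G.Adj i j ∨ (i ≠ j ∧ k < i ∧ k < j ∧ G.Adj i k ∧ G.Adj j k)
  symm := by
    constructor
    intro i j h
    rcases h with h | ⟨hne, hi, hj, hik, hjk⟩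
    · exact Or.inl h.symm
    · exact Or.inr ⟨hne.symm, hj, hi, hjk, hik⟩
  loopless := by
    constructor
    intro i h
    rcases h with h | ⟨hne, _⟩
    · exact G.loopless.irrefl i h
    · exact hne rfl

/-- The sequence of graphs `G_0 = G(A)`, `G_{k+1} = elimStep k G_k`, of symbolic Gaussian
elimination, processing the vertices `k : Fin n` in increasing order. -/
def elimSeq {n : ℕ} (A : Matrix (Fin n) (Fin n) ℝ) : ℕ → SimpleGraph (Fin n)
  | 0 => graphOf A
  | m + 1 => if h : m < n then elimStep ⟨m, h⟩ (elimSeq A m) else elimSeq A m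

section Aux

variable {V : Type*} {G : SimpleGraph V}

open SimpleGraph

/-- Auxiliary list lemma: `tail` and `dropLast` commute. -/
lemma aux_tail_dropLast {α : Type*} (l : List α) : l.tail.dropLast = l.dropLast.tail := by
  cases l with
  | nil => rfl
  | cons a t =>
    cases t with
    | nil => rfl
    | cons b t' => rw [List.dropLast_cons_of_ne_nil (by simp), List.tail_cons, List.tail_cons]

lemma aux_mem_dropLast {α : Type*} {l : List α} {u : α} (hu : u ∈ l)
    (hne : l ≠ []) (hlast : u ≠ l.getLast hne) : u ∈ l.dropLast := by
  conv at hu => rw [← List.dropLast_concat_getLast hne]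
  rcases List.mem_append.1 hu with h | h
  · exact h
  · simp only [List.mem_singleton] at h
    exact absurd h hlast

/-- In any walk, a support element distinct from the final endpoint lies in
`support.dropLast`. -/
lemma aux_mem_dropLast_support {x j u : V} (q : G.Walk x j) (hu : u ∈ q.support)
    (hj : u ≠ j) : u ∈ q.support.dropLast := by
  refine aux_mem_dropLast hu (q.support_ne_nil) ?_
  rw [q.getLast_support]
  exact hj

/-- A walk between distinct vertices has nonempty `support.tail`. -/
lemma aux_tail_ne_nil {a b : V} (w : G.Walk a b) (hab : a ≠ b) : w.support.tail ≠ [] := by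
  cases w with
  | nil => exact absurd rfl hab
  | cons h q => simp

/-- A member of `support.tail` distinct from the final endpoint is interior. -/
lemma aux_mem_tail_interior {i j u : V} (w : G.Walk i j) (hu : u ∈ w.support.tail)
    (hj : u ≠ j) : u ∈ w.support.tail.dropLast := by
  cases w with
  | nil => simp at hu
  | cons h q =>
    rw [Walk.support_cons, List.tail_cons] at hu ⊢
    exact aux_mem_dropLast_support q hu hj

/-- A support element distinct from both endpoints is an interior vertex. -/
lemma aux_mem_interior {i j u : V} (w : G.Walk i j) (hu : u ∈ w.support)
    (hi : u ≠ i) (hj : u ≠ j) : u ∈ w.support.tail.dropLast := by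
  have ht : u ∈ w.support.tail := by
    rw [w.support_eq_cons, List.mem_cons] at hu
    exact hu.resolve_left hi
  exact aux_mem_tail_interior w ht hj

lemma aux_dropLast_reverse {α : Type*} (l : List α) : l.reverse.dropLast = l.tail.reverse := by
  have h := List.tail_reverse (l := l.reverse)
  rw [List.reverse_reverse] at h
  rw [h, List.reverse_reverse]

/-- Reversing a walk reverses its interior list. -/
lemma aux_interior_reverse {i j : V} (w : G.Walk i j) :
    w.reverse.support.tail.dropLast = w.support.tail.dropLast.reverse := by
  rw [Walk.support_reverse, List.tail_reverse, aux_dropLast_reverse, aux_tail_dropLast]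

/-- Interior membership is preserved by reversal. -/
lemma aux_mem_interior_reverse {i j u : V} (w : G.Walk i j)
    (hu : u ∈ w.reverse.support.tail.dropLast) : u ∈ w.support.tail.dropLast := by
  rw [aux_interior_reverse, List.mem_reverse] at hu
  exact hu

/-- For a path, the first endpoint is not in `support.tail`. -/
lemma aux_head_not_mem_tail {i j : V} {p : G.Walk i j} (hp : p.IsPath) :
    i ∉ p.support.tail := by
  have h := hp.support_nodup
  rw [p.support_eq_cons] at h
  exact (List.nodup_cons.1 h).1

/-- For a path, the last endpoint is not an interior vertex. -/
lemma aux_last_not_mem_interior {i j : V} {p : G.Walk i j} (hp : p.IsPath) :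
    j ∉ p.support.tail.dropLast := by
  rw [aux_tail_dropLast]
  intro hmem
  have hj : j ∉ p.support.dropLast := by
    have h := hp.support_nodup
    conv at h => rw [← List.dropLast_concat_getLast p.support_ne_nil]
    rcases List.nodup_append.1 h with ⟨-, -, hdisj⟩
    intro hc
    exact hdisj _ hc _ (by simp [p.getLast_support]) rfl
  exact hj ((List.tail_sublist _).subset hmem)

end Aux

open SimpleGraph in
lemma elimSeq_le_succ {n : ℕ} (A : Matrix (Fin n) (Fin n) ℝ) (m : ℕ) :
    elimSeq A m ≤ elimSeq A (m + 1) := by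
  intro i j h
  show (elimSeq A (m + 1)).Adj i j
  dsimp only [elimSeq]
  split
  · exact Or.inl h
  · exact h

open SimpleGraph in
/-- Forward direction: adjacency in `elimSeq A m` yields a fill walk whose interior
vertices are below both endpoints and below `m`. -/
lemma elim_forward {n : ℕ} (A : Matrix (Fin n) (Fin n) ℝ) :
    ∀ m (i j : Fin n), (elimSeq A m).Adj i j →
      i ≠ j ∧ ∃ w : (graphOf A).Walk i j,
        ∀ u ∈ w.support.tail.dropLast, u < i ∧ u < j ∧ (u : ℕ) < m := by
  intro m
  induction m with
  | zero =>
    intro i j h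
    exact ⟨h.1, Walk.cons h Walk.nil, fun u hu => by change u ∈ ([] : List (Fin n)) at hu; simp at hu⟩
  | succ m ih =>
    intro i j h
    have hlift : (elimSeq A m).Adj i j →
        i ≠ j ∧ ∃ w : (graphOf A).Walk i j,
          ∀ u ∈ w.support.tail.dropLast, u < i ∧ u < j ∧ (u : ℕ) < m + 1 := by
      intro h'
      obtain ⟨hij, w, hw⟩ := ih i j h'
      exact ⟨hij, w, fun u hu =>
        ⟨(hw u hu).1, (hw u hu).2.1, Nat.lt_succ_of_lt (hw u hu).2.2⟩⟩
    dsimp only [elimSeq] at h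
    by_cases hmn : m < n
    · rw [dif_pos hmn] at h
      rcases h with h | ⟨hij, hki, hkj, hik, hjk⟩
      · exact hlift h
      · set k : Fin n := ⟨m, hmn⟩ with hk
        obtain ⟨hik', w1, hw1⟩ := ih i k hik
        obtain ⟨hjk', w2, hw2⟩ := ih j k hjk
        refine ⟨hij, w1.append w2.reverse, ?_⟩
        intro u hu
        have htne : w2.reverse.support.tail ≠ [] := aux_tail_ne_nil _ hkj.ne
        have hdecomp : (w1.append w2.reverse).support.tail.dropLast =
            w1.support.tail ++ w2.reverse.support.tail.dropLast := by
          rw [Walk.tail_support_append, List.dropLast_append_of_ne_nil htne]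
        rw [hdecomp, List.mem_append] at hu
        rcases hu with hu | hu
        · by_cases huk : u = k
          · subst huk
            exact ⟨hki, hkj, Nat.lt_succ_self m⟩
          · have := hw1 u (aux_mem_tail_interior w1 hu huk)
            exact ⟨this.1, lt_trans this.2.1 hkj, Nat.lt_succ_of_lt this.2.2⟩
        · have hu2 := aux_mem_interior_reverse w2 hu
          have := hw2 u hu2
          exact ⟨lt_trans this.2.1 hki, this.1, Nat.lt_succ_of_lt this.2.2⟩
    · rw [dif_neg hmn] at h
      exact hlift h

open SimpleGraph in
/-- Backward direction: a fill path whose interior vertices are below both endpoints and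
below `m` yields adjacency in `elimSeq A m`. -/
lemma elim_backward {n : ℕ} (A : Matrix (Fin n) (Fin n) ℝ) :
    ∀ m (i j : Fin n), i ≠ j → ∀ p : (graphOf A).Walk i j, p.IsPath →
      (∀ u ∈ p.support.tail.dropLast, u < i ∧ u < j ∧ (u : ℕ) < m) →
      (elimSeq A m).Adj i j := by
  intro m
  induction m with
  | zero =>
    intro i j hij p hp hint
    cases p with
    | nil => exact absurd rfl hij
    | cons h q =>
      cases q with
      | nil => exact h
      | cons h' q' =>
        exact absurd (hint _ (by
          rw [Walk.support_cons, List.tail_cons, Walk.support_cons,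
            List.dropLast_cons_of_ne_nil q'.support_ne_nil]
          exact List.mem_cons_self)).2.2 (Nat.not_lt_zero _)
  | succ m ih =>
    intro i j hij p hp hint
    by_cases hk : ∃ u ∈ p.support.tail.dropLast, (u : ℕ) = m
    · obtain ⟨k, hkmem, hkval⟩ := hk
      have hmn : m < n := hkval ▸ k.isLt
      obtain ⟨hki, hkj, -⟩ := hint k hkmem
      have hks : k ∈ p.support :=
        (List.tail_sublist _).subset ((List.dropLast_sublist _).subset hkmem)
      set w1 := p.takeUntil k hks with hw1def
      set w2 := p.dropUntil k hks with hw2def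
      have hspec : w1.append w2 = p := p.take_spec hks
      have hp1 : w1.IsPath := hp.takeUntil hks
      have hp2 : w2.IsPath := hp.dropUntil hks
      have hsup : p.support = w1.support ++ w2.support.tail := by
        rw [← hspec, Walk.support_append]
      have hnd := hp.support_nodup
      rw [hsup] at hnd
      have hdisj := (List.nodup_append.1 hnd).2.2
      have hjw2 : j ∈ w2.support.tail := by
        have hj2 : j ∈ w2.support := Walk.end_mem_support w2
        rw [w2.support_eq_cons, List.mem_cons] at hj2
        exact hj2.resolve_left hkj.ne'
      -- the value of an interior vertex of `p` other than `k` is `< m`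
      have hval : ∀ u : Fin n, u ∈ p.support.tail.dropLast → u ≠ k → (u : ℕ) < m := by
        intro u hu hne
        have h1 := (hint u hu).2.2
        have h2 : (u : ℕ) ≠ m := fun hc => hne (Fin.ext (hc.trans hkval.symm))
        omega
      -- adjacency between i and k
      have hadjik : (elimSeq A m).Adj i k := by
        refine ih i k hki.ne' w1 hp1 ?_
        intro u hu
        have hu_tail : u ∈ w1.support.tail := (List.dropLast_sublist _).subset hu
        have hu_sup : u ∈ w1.support := (List.tail_sublist _).subset hu_tail
        have hui : u ≠ i := fun hc => aux_head_not_mem_tail hp1 (hc ▸ hu_tail)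
        have huk : u ≠ k := fun hc => aux_last_not_mem_interior hp1 (hc ▸ hu)
        have huj : u ≠ j := fun hc => hdisj j (hc ▸ hu_sup) j hjw2 rfl
        have hup : u ∈ p.support.tail.dropLast :=
          aux_mem_interior p (p.support_takeUntil_subset hks hu_sup) hui huj
        have hv := hval u hup huk
        exact ⟨(hint u hup).1, by rw [Fin.lt_def, hkval]; exact hv, hv⟩
      -- adjacency between j and k
      have hadjjk : (elimSeq A m).Adj j k := by
        refine ih j k hkj.ne' w2.reverse hp2.reverse ?_
        intro u hu
        have hu2 : u ∈ w2.support.tail.dropLast := aux_mem_interior_reverse w2 hu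
        have hu_tail : u ∈ w2.support.tail := (List.dropLast_sublist _).subset hu2
        have huk : u ≠ k := fun hc => aux_head_not_mem_tail hp2 (hc ▸ hu_tail)
        have huj : u ≠ j := fun hc => aux_last_not_mem_interior hp2 (hc ▸ hu2)
        have hui : u ≠ i := fun hc =>
          hdisj i (SimpleGraph.Walk.start_mem_support w1) i (hc ▸ hu_tail) rfl
        have hup : u ∈ p.support.tail.dropLast := by
          refine aux_mem_interior p ?_ hui huj
          rw [hsup, List.mem_append]
          exact Or.inr hu_tail
        have hv := hval u hup huk
        exact ⟨(hint u hup).2.1, by rw [Fin.lt_def, hkval]; exact hv, hv⟩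
      have hkeq : (⟨m, hmn⟩ : Fin n) = k := Fin.ext hkval.symm
      show (elimSeq A (m + 1)).Adj i j
      dsimp only [elimSeq]
      rw [dif_pos hmn, hkeq]
      exact Or.inr ⟨hij, hki, hkj, hadjik, hadjjk⟩
    · push_neg at hk
      have : (elimSeq A m).Adj i j := by
        refine ih i j hij p hp ?_
        intro u hu
        have h1 := hint u hu
        have h2 := hk u hu
        exact ⟨h1.1, h1.2.1, by omega⟩
      exact elimSeq_le_succ A m this

theorem elimSeq_adj_iff_fill {n : ℕ} (A : Matrix (Fin n) (Fin n) ℝ) (i j : Fin n) :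
    (elimSeq A n).Adj i j ↔ fill A i j := by
  constructor
  · intro h
    obtain ⟨hij, w, hw⟩ := elim_forward A n i j h
    exact ⟨hij, w, fun u hu => ⟨(hw u hu).1, (hw u hu).2.1⟩⟩
  · rintro ⟨hij, w, hw⟩
    refine elim_backward A n i j hij w.bypass w.bypass_isPath ?_
    intro u hu
    have hu_tail : u ∈ w.bypass.support.tail := (List.dropLast_sublist _).subset hu
    have hui : u ≠ i := fun hc => aux_head_not_mem_tail w.bypass_isPath (hc ▸ hu_tail)
    have huj : u ≠ j := fun hc => aux_last_not_mem_interior w.bypass_isPath (hc ▸ hu)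
    have hup : u ∈ w.support.tail.dropLast :=
      aux_mem_interior w (w.support_bypass_subset ((List.tail_sublist _).subset hu_tail))
        hui huj
    exact ⟨(hw u hup).1, (hw u hup).2, u.isLt⟩
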